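/- Let n ≥ 2, let κ = (κ_1,…,κ_n) ∈ K_2 be ordered decreasingly, κ_1 ≥ ⋯ ≥ κ_n, and let δ be a real number with 0 < δ ≤ 3n/(2(n−1)). Then δ·(S_1(κ) − κ_n) < 3·S_1(κ). -/
import Mathlib


open Finset

/-- The `k`-th elementary symmetric polynomial of `x ∈ ℝ^m`. -/
noncomputable def esymm {m : ℕ} (k : ℕ) (x : Fin m → ℝ) : ℝ :=
  ∑ t ∈ Finset.powersetCard k (Finset.univ : Finset (Fin m)), ∏ i ∈ t, x i

lemma esymm_one' {m : ℕ} (x : Fin m → ℝ) : esymm 1 x = ∑ i, x i := by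
  simp [esymm, Finset.powersetCard_one]

lemma hbij' {m : ℕ} (x : Fin m → ℝ) :
    ∑ p ∈ ((univ : Finset (Fin m)).offDiag.filter fun p => p.1 < p.2), x p.1 * x p.2 =
      esymm 2 x := by
  unfold esymm
  refine Finset.sum_bij' (fun p _ => ({p.1, p.2} : Finset (Fin m)))
    (fun t ht => (t.min' ?_, t.max' ?_)) ?_ ?_ ?_ ?_ ?_
  · exact Finset.card_pos.1 (by rw [(Finset.mem_powersetCard_univ).1 ht]; norm_num)
  · exact Finset.card_pos.1 (by rw [(Finset.mem_powersetCard_univ).1 ht]; norm_num)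
  · intro p hp
    simp only [Finset.mem_filter, Finset.mem_offDiag] at hp
    rw [Finset.mem_powersetCard_univ, Finset.card_insert_of_notMem (by simp [hp.2.ne]),
      Finset.card_singleton]
  · intro t ht
    simp only [Finset.mem_filter, Finset.mem_offDiag]
    have hcard := (Finset.mem_powersetCard_univ).1 ht
    have hT : t.Nonempty := Finset.card_pos.1 (by omega)
    have hne : t.min' hT ≠ t.max' hT := by
      intro h
      have := Finset.card_le_one.2 (fun a ha b hb => by
        have h1 := Finset.min'_le t a ha
        have h2 := Finset.le_max' t a ha
        have h3 := Finset.min'_le t b hb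
        have h4 := Finset.le_max' t b hb
        rw [← h] at h2 h4
        exact le_antisymm (h2.trans h3) (h4.trans h1))
      omega
    exact ⟨⟨Finset.mem_univ _, Finset.mem_univ _, hne⟩, lt_of_le_of_ne
      (Finset.min'_le _ _ (Finset.max'_mem _ _)) hne⟩
  · intro p hp
    simp only [Finset.mem_filter, Finset.mem_offDiag] at hp
    have hT : ({p.1, p.2} : Finset (Fin m)).Nonempty := ⟨p.1, by simp⟩
    have h1 : ({p.1, p.2} : Finset (Fin m)).min' hT = p.1 := by
      apply le_antisymm (Finset.min'_le _ _ (by simp))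
      apply Finset.le_min'
      intro y hy
      rcases Finset.mem_insert.1 hy with h | h
      · exact h.ge
      · exact (Finset.mem_singleton.1 h ▸ hp.2.le)
    have h2 : ({p.1, p.2} : Finset (Fin m)).max' hT = p.2 := by
      apply le_antisymm
      · apply Finset.max'_le
        intro y hy
        rcases Finset.mem_insert.1 hy with h | h
        · exact h ▸ hp.2.le
        · exact (Finset.mem_singleton.1 h).le
      · exact Finset.le_max' _ _ (by simp)
    simp [h1, h2]
  · intro t ht
    have hcard := (Finset.mem_powersetCard_univ).1 ht
    rcases Finset.card_eq_two.1 hcard with ⟨a, b, hab, rfl⟩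
    have hT : ({a, b} : Finset (Fin m)).Nonempty := ⟨a, by simp⟩
    rcases hab.lt_or_gt with h | h
    · have h1 : ({a, b} : Finset (Fin m)).min' hT = a := by
        apply le_antisymm (Finset.min'_le _ _ (by simp))
        exact Finset.le_min' _ _ _ (fun y hy => by
          rcases Finset.mem_insert.1 hy with rfl | hy
          · exact le_refl _
          · exact (Finset.mem_singleton.1 hy ▸ h.le))
      have h2 : ({a, b} : Finset (Fin m)).max' hT = b := by
        apply le_antisymm
        · exact Finset.max'_le _ _ _ (fun y hy => by
            rcases Finset.mem_insert.1 hy with rfl | hy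
            · exact h.le
            · exact (Finset.mem_singleton.1 hy).le)
        · exact Finset.le_max' _ _ (by simp)
      simp [h1, h2]
    · have h1 : ({a, b} : Finset (Fin m)).min' hT = b := by
        apply le_antisymm (Finset.min'_le _ _ (by simp))
        exact Finset.le_min' _ _ _ (fun y hy => by
          rcases Finset.mem_insert.1 hy with rfl | hy
          · exact h.le
          · exact (Finset.mem_singleton.1 hy ▸ le_refl _))
      have h2 : ({a, b} : Finset (Fin m)).max' hT = a := by
        apply le_antisymm
        · exact Finset.max'_le _ _ _ (fun y hy => by
            rcases Finset.mem_insert.1 hy with rfl | hy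
            · exact le_refl _
            · exact (Finset.mem_singleton.1 hy ▸ h.le))
        · exact Finset.le_max' _ _ (by simp)
      simp [h1, h2]
      exact (Finset.pair_comm a b).symm
  · intro p hp
    simp only [Finset.mem_filter, Finset.mem_offDiag] at hp
    rw [Finset.prod_pair hp.2.ne]

lemma two_esymm_two {m : ℕ} (x : Fin m → ℝ) :
    (∑ i, x i) ^ 2 = (∑ i, (x i) ^ 2) + 2 * esymm 2 x := by
  have hsq : (∑ i, x i) ^ 2 = ∑ p ∈ (univ ×ˢ univ : Finset (Fin m × Fin m)), x p.1 * x p.2 := by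
    rw [sq, Finset.sum_mul_sum, ← Finset.sum_product']
  rw [hsq, ← Finset.diag_union_offDiag,
    Finset.sum_union (Finset.disjoint_diag_offDiag _), Finset.sum_diag]
  congr 1
  · exact Finset.sum_congr rfl fun i _ => (sq (x i)).symm
  have hsplit : (univ : Finset (Fin m)).offDiag =
      ((univ : Finset (Fin m)).offDiag.filter fun p => p.1 < p.2) ∪
      ((univ : Finset (Fin m)).offDiag.filter fun p => p.2 < p.1) := by
    rw [← Finset.filter_or]
    refine (Finset.filter_true_of_mem fun p hp => ?_).symm
    rcases Finset.mem_offDiag.1 hp with ⟨-, -, hne⟩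
    exact hne.lt_or_gt
  have hdisj : Disjoint ((univ : Finset (Fin m)).offDiag.filter fun p => p.1 < p.2)
      ((univ : Finset (Fin m)).offDiag.filter fun p => p.2 < p.1) := by
    rw [Finset.disjoint_left]
    intro p hp1 hp2
    simp only [Finset.mem_filter] at hp1 hp2
    exact absurd (hp1.2.trans hp2.2) (lt_irrefl _)
  have hswap : ∑ p ∈ ((univ : Finset (Fin m)).offDiag.filter fun p => p.2 < p.1), x p.1 * x p.2 =
      ∑ p ∈ ((univ : Finset (Fin m)).offDiag.filter fun p => p.1 < p.2), x p.1 * x p.2 := by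
    refine Finset.sum_nbij' (fun p => (p.2, p.1)) (fun p => (p.2, p.1)) ?_ ?_ ?_ ?_ ?_
    · intro p hp
      simp only [Finset.mem_filter, Finset.mem_offDiag] at hp ⊢
      exact ⟨⟨hp.1.2.1, hp.1.1, fun h => hp.1.2.2 h.symm⟩, hp.2⟩
    · intro p hp
      simp only [Finset.mem_filter, Finset.mem_offDiag] at hp ⊢
      exact ⟨⟨hp.1.2.1, hp.1.1, fun h => hp.1.2.2 h.symm⟩, hp.2⟩
    · intro p _; rfl
    · intro p _; rfl
    · intro p _; exact mul_comm _ _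
  rw [hsplit, Finset.sum_union hdisj, hswap, hbij' x]
  ring


theorem stmt_16 (n : ℕ) (hn : 2 ≤ n) (κ : Fin n → ℝ)
    (hord : ∀ i j : Fin n, i ≤ j → κ j ≤ κ i)
    (h1 : 0 < esymm 1 κ) (h2 : 0 < esymm 2 κ)
    (δ : ℝ) (hδ0 : 0 < δ) (hδ : δ ≤ 3 * (n : ℝ) / (2 * ((n : ℝ) - 1))) :
    δ * (esymm 1 κ - κ ⟨n - 1, by omega⟩) < 3 * esymm 1 κ := by
  set last : Fin n := ⟨n - 1, by omega⟩ with hlast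
  set s : ℝ := ∑ i, κ i with hs
  set t : ℝ := κ last with ht
  rw [esymm_one'] at h1 ⊢
  rw [← hs] at h1 ⊢
  have hn1 : (0:ℝ) < (n:ℝ) - 1 := by
    have : (2:ℝ) ≤ (n:ℝ) := by exact_mod_cast hn
    linarith
  have hnR : (2:ℝ) ≤ (n:ℝ) := by exact_mod_cast hn
  -- t is the minimum
  have hmin : ∀ i : Fin n, t ≤ κ i := fun i => hord i last (by
    have := i.isLt; exact Fin.le_def.2 (by simp [hlast]; omega))
  -- n * t ≤ s
  have hnt : (n:ℝ) * t ≤ s := by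
    calc (n:ℝ) * t = ∑ _i : Fin n, t := by simp [mul_comm]
    _ ≤ s := Finset.sum_le_sum fun i _ => hmin i
  have hst : t < s := by
    rcases le_or_gt t 0 with h | h
    · linarith
    · nlinarith
  -- sums over erase
  have hQ : s ^ 2 = (∑ i, (κ i)^2) + 2 * esymm 2 κ := two_esymm_two κ
  set Q : ℝ := ∑ i, (κ i)^2 with hQdef
  have hQlt : Q < s ^ 2 := by linarith
  have he1 : ∑ i ∈ univ.erase last, κ i = s - t := by
    have := Finset.add_sum_erase univ κ (Finset.mem_univ last)
    rw [hs, ht]; linarith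
  have he2 : ∑ i ∈ univ.erase last, (κ i)^2 = Q - t^2 := by
    have := Finset.add_sum_erase univ (fun i => (κ i)^2) (Finset.mem_univ last)
    simp only [hQdef, ht] at this ⊢; linarith
  have hcard : ((univ.erase last).card : ℝ) = (n:ℝ) - 1 := by
    rw [Finset.card_erase_of_mem (Finset.mem_univ _)]
    simp
    have : 0 < n := by omega
    push_cast [Nat.cast_sub (by omega : 1 ≤ n)]
    ring
  have hcauchy : (s - t)^2 ≤ ((n:ℝ) - 1) * (Q - t^2) := by
    have := sq_sum_le_card_mul_sum_sq (s := univ.erase last) (f := κ)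
    rw [he1, he2, hcard] at this
    exact this
  have key : 0 < ((n:ℝ) - 2) * s + (n:ℝ) * t := by
    have h6 : (s - t)^2 < ((n:ℝ) - 1) * (s^2 - t^2) := by nlinarith
    nlinarith [sub_pos.2 hst]
  have step : δ * (s - t) ≤ 3 * (n:ℝ) / (2 * ((n:ℝ) - 1)) * (s - t) :=
    mul_le_mul_of_nonneg_right hδ (by linarith)
  refine step.trans_lt ?_
  rw [div_mul_eq_mul_div, div_lt_iff₀ (by linarith)]
  nlinarith [key]
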